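/- For every self-adjoint f ∈ A(n,n'), the function t ↦ tr(f(t)) is continuous and real-valued on [0,1] and satisfies tr(f(0)) = (a/(a+1))·tr(f(1)). Conversely, for every continuous function g : [0,1] → ℝ with g(0) = (a/(a+1))·g(1), there exists a self-adjoint f ∈ A(n,n') with tr(f(t)) = g(t) for all t ∈ [0,1]. -/

import Mathlib

open scoped Matrix.Norms.L2Operator ComplexOrder
open Filter MeasureTheory
open scoped Matrix

noncomputable section

/-- The unit interval `[0,1]`. -/
abbrev I01 : Type := unitInterval

/-- Square complex matrices of size `N`. -/
abbrev Mat (N : ℕ) : Type := Matrix (Fin N) (Fin N) ℂ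

/-- Block-diagonal matrix with `m` diagonal blocks of size `k` (block `0` in the upper left),
realized as an `N × N` matrix, where `h : k * m = N`. -/
def cdiag {k m N : ℕ} (h : k * m = N) (blocks : Fin m → Mat k) : Mat N :=
  Matrix.reindex (finProdFinEquiv.trans (finCongr h)) (finProdFinEquiv.trans (finCongr h))
    (Matrix.blockDiagonal blocks)

/-- The Razak building block `A(n, n')` with `n' = n * (a + 1)`, realized as a subset of
`C([0,1], M_N(ℂ))` where `h : n * (a + 1) = N`: those continuous matrix-valued functions `f`
for which there is `c ∈ M_n(ℂ)` with `f 0 = diag(c, …, c, 0_n)` (`a` copies of `c`) and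
`f 1 = diag(c, …, c)` (`a + 1` copies of `c`). -/
def razakA (n a : ℕ) {N : ℕ} (h : n * (a + 1) = N) : Set C(I01, Mat N) :=
  {f | ∃ c : Mat n,
    f 0 = cdiag h (fun i : Fin (a + 1) => if (i : ℕ) < a then c else 0) ∧
    f 1 = cdiag h (fun _ : Fin (a + 1) => c)}

/-- The normalized trace of a square complex matrix. -/
def ntr {N : ℕ} (M : Mat N) : ℂ := M.trace / N

lemma trace_cdiag {k m N : ℕ} (h : k * m = N) (b : Fin m → Mat k) :
    (cdiag h b).trace = ∑ i, (b i).trace := by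
  rw [cdiag]
  rw [show (Matrix.reindex (finProdFinEquiv.trans (finCongr h))
      (finProdFinEquiv.trans (finCongr h)) (Matrix.blockDiagonal b)).trace
      = (Matrix.blockDiagonal b).trace from ?_, Matrix.trace_blockDiagonal]
  simp only [Matrix.reindex, Matrix.trace, Matrix.diag, Matrix.submatrix_apply,
    Equiv.coe_fn_mk]
  exact Fintype.sum_equiv (finProdFinEquiv.trans (finCongr h)).symm _ _ (fun i => rfl)

lemma conjTranspose_cdiag {k m N : ℕ} (h : k * m = N) (b : Fin m → Mat k) :
    (cdiag h b)ᴴ = cdiag h (fun i => (b i)ᴴ) := by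
  rw [cdiag, cdiag, Matrix.conjTranspose_reindex, Matrix.blockDiagonal_conjTranspose]

lemma cdiag_add {k m N : ℕ} (h : k * m = N) (b c : Fin m → Mat k) :
    cdiag h b + cdiag h c = cdiag h (fun i => b i + c i) := by
  ext i j
  simp only [cdiag, Matrix.reindex_apply, Matrix.submatrix_apply, Matrix.add_apply,
    Matrix.blockDiagonal_apply]
  split <;> simp

lemma cdiag_smul {k m N : ℕ} (h : k * m = N) (r : ℂ) (b : Fin m → Mat k) :
    r • cdiag h b = cdiag h (fun i => r • b i) := by
  ext i j
  simp only [cdiag, Matrix.reindex_apply, Matrix.submatrix_apply, Matrix.smul_apply,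
    Matrix.blockDiagonal_apply]
  split <;> simp

lemma sum_if_lt (a : ℕ) (x : ℂ) :
    ∑ i : Fin (a + 1), (if (i : ℕ) < a then x else 0) = a * x := by
  rw [Fin.sum_univ_castSucc]
  simp [Fin.is_lt, mul_comm]

/-- for self-adjoint `f ∈ A(n,n')`, `t ↦ tr(f(t))` is a continuous real-valued
function with `tr(f(0)) = (a/(a+1))·tr(f(1))`; conversely every continuous `g : [0,1] → ℝ`
with `g(0) = (a/(a+1))·g(1)` arises this way from some self-adjoint `f ∈ A(n,n')`. -/
theorem razak_trace_functions (n a : ℕ) (hn : 0 < n) (ha : 0 < a) :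
    (∀ f ∈ razakA n a rfl, star f = f →
      Continuous (fun t : I01 => ntr (f t)) ∧
      (∀ t : I01, (ntr (f t)).im = 0) ∧
      ntr (f 0) = ((a : ℂ) / ((a : ℂ) + 1)) * ntr (f 1)) ∧
    (∀ g : C(I01, ℝ), g 0 = ((a : ℝ) / ((a : ℝ) + 1)) * g 1 →
      ∃ f ∈ razakA n a rfl, star f = f ∧ ∀ t : I01, ntr (f t) = ((g t : ℝ) : ℂ)) := by
  have haC : ((a : ℂ) + 1) ≠ 0 := by
    exact_mod_cast (Nat.cast_add_one_ne_zero a : ((a : ℂ) + 1) ≠ 0)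
  have hnC : (n : ℂ) ≠ 0 := Nat.cast_ne_zero.mpr hn.ne'
  have haR : ((a : ℝ) + 1) ≠ 0 := Nat.cast_add_one_ne_zero a
  constructor
  · rintro f ⟨c, hf0, hf1⟩ hsa
    refine ⟨?_, ?_, ?_⟩
    · apply Continuous.div_const
      apply continuous_finset_sum
      intro i _
      exact ((continuous_apply i).comp (continuous_apply i)).comp f.continuous
    · intro t
      have h1 : (f t)ᴴ = f t := by
        have := congrFun (congrArg DFunLike.coe hsa) t
        rwa [ContinuousMap.star_apply, Matrix.star_eq_conjTranspose] at this
      have h2 : (starRingEnd ℂ) ((f t).trace) = (f t).trace := by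
        conv_rhs => rw [← h1]
        rw [Matrix.trace_conjTranspose]
        rfl
      have h3 : ((f t).trace).im = 0 := by
        have h4 := congrArg Complex.im h2
        simp only [Complex.conj_im] at h4
        linarith
      simp [ntr, Complex.div_im, h3]
    · have e0 : (f 0).trace = a * c.trace := by
        rw [hf0, trace_cdiag]
        simp only [apply_ite Matrix.trace, Matrix.trace_zero]
        exact sum_if_lt a c.trace
      have e1 : (f 1).trace = (a + 1) * c.trace := by
        rw [hf1, trace_cdiag]
        simp [Finset.sum_const, mul_comm]
      unfold ntr
      rw [e0, e1]
      push_cast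
      field_simp
  · intro g hg
    set A1 : Mat (n * (a + 1)) :=
      cdiag rfl (fun i : Fin (a + 1) => if (i : ℕ) < a then (1 : Mat n) else 0) with hA1
    set Q : Mat (n * (a + 1)) :=
      cdiag rfl (fun i : Fin (a + 1) => if (i : ℕ) < a then 0 else (1 : Mat n)) with hQ
    have hbeta : Continuous fun t : I01 =>
        ((((a : ℝ) + 1) * g t - (a : ℝ) * g 1 : ℝ) : ℂ) := by
      exact Complex.continuous_ofReal.comp (by fun_prop)
    refine ⟨⟨fun t => ((g 1 : ℝ) : ℂ) • A1 +
      ((((a : ℝ) + 1) * g t - (a : ℝ) * g 1 : ℝ) : ℂ) • Q, by fun_prop⟩, ?_, ?_, ?_⟩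
    · refine ⟨((g 1 : ℝ) : ℂ) • (1 : Mat n), ?_, ?_⟩
      · have hb0 : (((a : ℝ) + 1) * g 0 - (a : ℝ) * g 1 : ℝ) = 0 := by
          rw [hg]; field_simp; ring
        have hbl : (fun i : Fin (a + 1) => ((g 1 : ℝ) : ℂ) •
            (if (i : ℕ) < a then (1 : Mat n) else 0))
            = fun i : Fin (a + 1) =>
              if (i : ℕ) < a then ((g 1 : ℝ) : ℂ) • (1 : Mat n) else 0 := by
          funext i; split <;> simp
        simp only [ContinuousMap.coe_mk, hb0, Complex.ofReal_zero, zero_smul, add_zero,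
          hA1, cdiag_smul, hbl]
      · have hb1 : (((a : ℝ) + 1) * g 1 - (a : ℝ) * g 1 : ℝ) = g 1 := by ring
        have hbl : (fun i : Fin (a + 1) =>
            (((g 1 : ℝ) : ℂ) • if (i : ℕ) < a then (1 : Mat n) else 0) +
              ((g 1 : ℝ) : ℂ) • if (i : ℕ) < a then 0 else (1 : Mat n))
            = fun _ : Fin (a + 1) => ((g 1 : ℝ) : ℂ) • (1 : Mat n) := by
          funext i; split <;> simp
        simp only [ContinuousMap.coe_mk, hb1, hA1, hQ, cdiag_smul, cdiag_add, hbl]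
    · apply ContinuousMap.ext
      intro t
      rw [ContinuousMap.star_apply, Matrix.star_eq_conjTranspose]
      have hA : A1ᴴ = A1 := by
        rw [hA1, conjTranspose_cdiag]
        have hbl : (fun i : Fin (a + 1) => (if (i : ℕ) < a then (1 : Mat n) else 0)ᴴ)
            = fun i : Fin (a + 1) => if (i : ℕ) < a then (1 : Mat n) else 0 := by
          funext i; split <;> simp
        rw [hbl]
      have hQc : Qᴴ = Q := by
        rw [hQ, conjTranspose_cdiag]
        have hbl : (fun i : Fin (a + 1) => (if (i : ℕ) < a then 0 else (1 : Mat n))ᴴ)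
            = fun i : Fin (a + 1) => if (i : ℕ) < a then 0 else (1 : Mat n) := by
          funext i; split <;> simp
        rw [hbl]
      simp only [ContinuousMap.coe_mk]
      rw [Matrix.conjTranspose_add, Matrix.conjTranspose_smul, Matrix.conjTranspose_smul,
        hA, hQc]
      simp [Complex.star_def, Complex.conj_ofReal]
    · intro t
      have trA : A1.trace = (a : ℂ) * n := by
        rw [hA1, trace_cdiag]
        simp only [apply_ite Matrix.trace, Matrix.trace_zero, Matrix.trace_one]
        rw [sum_if_lt]
        simp [Matrix.trace_one]
      have trQ : Q.trace = (n : ℂ) := by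
        rw [hQ, trace_cdiag]
        rw [Fin.sum_univ_castSucc]
        simp [Fin.is_lt, Matrix.trace_one]
      unfold ntr
      simp only [ContinuousMap.coe_mk]
      rw [Matrix.trace_add, Matrix.trace_smul, Matrix.trace_smul, trA, trQ]
      push_cast
      field_simp
      ring
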